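/- Let L be a finite topographically balanced lattice with rank function ρ. Then for all s, t ∈ L, the distance between s and t in the cover graph of L equals ρ(s) + ρ(t) − 2ρ(s ∧ t), which also equals 2ρ(s ∨ t) − ρ(s) − ρ(t). -/

import Mathlib

def TopBalanced (L : Type*) [Lattice L] : Prop :=
  (∀ v s t : L, v ⋖ s → v ⋖ t → s ≠ t → ∃! u : L, s ⋖ u ∧ t ⋖ u) ∧
  (∀ s t u : L, s ⋖ u → t ⋖ u → s ≠ t → ∃! v : L, v ⋖ s ∧ v ⋖ t)

def IsRankFunction (L : Type*) [Lattice L] [OrderBot L] (ρ : L → ℕ) : Prop :=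
  ρ ⊥ = 0 ∧ ∀ x y : L, x ⋖ y → ρ y = ρ x + 1

/-- The cover graph of a lattice: `x` and `y` are adjacent iff one covers the other. -/
def coverGraph (L : Type*) [Lattice L] : SimpleGraph L where
  Adj x y := x ⋖ y ∨ y ⋖ x
  symm := ⟨fun _ _ h => h.symm⟩
  loopless := ⟨fun _ h => by rcases h with h | h <;> exact h.lt.false⟩

section Aux

variable {L : Type*} [Lattice L] [Fintype L] {ρ : L → ℕ}

lemma rank_mono (hc : ∀ x y : L, x ⋖ y → ρ y = ρ x + 1) :
    ∀ x y : L, x ≤ y → ρ x ≤ ρ y := by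
  haveI : IsStronglyCoatomic L := IsStronglyCoatomic.of_wellFounded_gt wellFounded_gt
  intro x y
  induction y using WellFoundedLT.induction with
  | ind y IH =>
    intro hxy
    rcases eq_or_lt_of_le hxy with rfl | hlt
    · exact le_rfl
    · obtain ⟨y', hxy', hy'⟩ := exists_le_covBy_of_lt hlt
      have := hc y' y hy'
      have h2 := IH y' hy'.lt hxy'
      omega

lemma rank_strictMono (hc : ∀ x y : L, x ⋖ y → ρ y = ρ x + 1) :
    ∀ x y : L, x < y → ρ x < ρ y := by
  haveI : IsStronglyCoatomic L := IsStronglyCoatomic.of_wellFounded_gt wellFounded_gt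
  intro x y hlt
  obtain ⟨y', hxy', hy'⟩ := exists_le_covBy_of_lt hlt
  have := hc y' y hy'
  have := rank_mono hc x y' hxy'
  omega

/-- Birkhoff-style step up: if `x ⋖ y` and `x ≤ z` then `z = y ⊔ z` or `z ⋖ y ⊔ z`. -/
lemma tb_join_step (htb : TopBalanced L) (hc : ∀ x y : L, x ⋖ y → ρ y = ρ x + 1) :
    ∀ n : ℕ, ∀ x y z : L, x ⋖ y → x ≤ z → ρ z - ρ x ≤ n → z = y ⊔ z ∨ z ⋖ y ⊔ z := by
  haveI : IsStronglyAtomic L := IsStronglyAtomic.of_wellFounded_lt wellFounded_lt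
  intro n
  induction n with
  | zero =>
    intro x y z hxy hxz hn
    rcases eq_or_lt_of_le hxz with rfl | hlt
    · right
      have h : y ⊔ x = y := sup_eq_left.mpr hxy.le
      rw [h]; exact hxy
    · have := rank_strictMono hc x z hlt
      omega
  | succ n IH =>
    intro x y z hxy hxz hn
    rcases eq_or_lt_of_le hxz with rfl | hlt
    · right
      have h : y ⊔ x = y := sup_eq_left.mpr hxy.le
      rw [h]; exact hxy
    by_cases hyz : y ≤ z
    · exact Or.inl (sup_eq_right.mpr hyz).symm
    obtain ⟨x', hxx', hx'z⟩ := exists_covBy_le_of_lt hlt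
    have hne : y ≠ x' := fun h => hyz (h ▸ hx'z)
    obtain ⟨u, ⟨hyu, hx'u⟩, -⟩ := htb.1 x y x' hxy hxx' hne
    have hx'y : ¬ x' ≤ y := fun h =>
      hne ((h.lt_or_eq.resolve_left (hxy.2 hxx'.lt)).symm)
    have h1 : y ⊔ x' ≤ u := sup_le hyu.le hx'u.le
    have h2 : y < y ⊔ x' := left_lt_sup.mpr hx'y
    have hu : y ⊔ x' = u := by
      rcases lt_or_eq_of_le h1 with h | h
      · exact absurd h (hyu.2 h2)
      · exact h
    have hcov' : x' ⋖ y ⊔ x' := hu ▸ hx'u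
    have hρx' : ρ x' = ρ x + 1 := hc x x' hxx'
    have hxz' : ρ x < ρ z := rank_strictMono hc x z hlt
    have := IH x' (y ⊔ x') z hcov' hx'z (by omega)
    have heq : (y ⊔ x') ⊔ z = y ⊔ z := by
      rw [sup_assoc, sup_eq_right.mpr hx'z]
    rcases this with h | h
    · exact absurd (le_sup_left.trans (h.trans heq).ge) hyz
    · exact Or.inr (heq ▸ h)

/-- Dual step: if `b ⋖ a` and `z ≤ a` then `z = b ⊓ z` or `b ⊓ z ⋖ z`. -/
lemma tb_meet_step (htb : TopBalanced L) (hc : ∀ x y : L, x ⋖ y → ρ y = ρ x + 1) :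
    ∀ n : ℕ, ∀ a b z : L, b ⋖ a → z ≤ a → ρ a - ρ z ≤ n → z = b ⊓ z ∨ b ⊓ z ⋖ z := by
  haveI : IsStronglyCoatomic L := IsStronglyCoatomic.of_wellFounded_gt wellFounded_gt
  intro n
  induction n with
  | zero =>
    intro a b z hba hza hn
    rcases eq_or_lt_of_le hza with rfl | hlt
    · right
      have h : b ⊓ z = b := inf_eq_left.mpr hba.le
      rw [h]; exact hba
    · have := rank_strictMono hc z a hlt
      omega
  | succ n IH =>
    intro a b z hba hza hn
    rcases eq_or_lt_of_le hza with rfl | hlt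
    · right
      have h : b ⊓ z = b := inf_eq_left.mpr hba.le
      rw [h]; exact hba
    by_cases hzb : z ≤ b
    · exact Or.inl (inf_eq_right.mpr hzb).symm
    obtain ⟨a', hza', ha'a⟩ := exists_le_covBy_of_lt hlt
    have hne : b ≠ a' := fun h => hzb (h ▸ hza')
    obtain ⟨v, ⟨hvb, hva'⟩, -⟩ := htb.2 b a' a hba ha'a hne
    have hba' : ¬ b ≤ a' := fun h =>
      h.lt_or_eq.elim (fun h' => hba.2 h' ha'a.lt) hne
    have h1 : v ≤ b ⊓ a' := le_inf hvb.le hva'.le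
    have h2 : b ⊓ a' < b := inf_lt_left.mpr hba'
    have hv : b ⊓ a' = v := by
      rcases lt_or_eq_of_le h1 with h | h
      · exact absurd h2 (hvb.2 h)
      · exact h.symm
    have hcov' : b ⊓ a' ⋖ a' := hv ▸ hva'
    have hρa' : ρ a = ρ a' + 1 := hc a' a ha'a
    have hza'' : ρ z < ρ a := rank_strictMono hc z a hlt
    have hzle : ρ z ≤ ρ a' := rank_mono hc z a' hza'
    have := IH a' (b ⊓ a') z hcov' hza' (by omega)
    have heq : (b ⊓ a') ⊓ z = b ⊓ z := by
      rw [inf_assoc, inf_eq_right.mpr hza']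
    rcases this with h | h
    · exact absurd ((h.trans heq).le.trans inf_le_left) hzb
    · exact Or.inr (heq ▸ h)

/-- Semimodularity consequence for meets: `x ⋖ y → ρ (y ⊓ t) ≤ ρ (x ⊓ t) + 1`. -/
lemma tb_meet_rank (htb : TopBalanced L) (hc : ∀ x y : L, x ⋖ y → ρ y = ρ x + 1)
    (x y t : L) (hxy : x ⋖ y) : ρ (y ⊓ t) ≤ ρ (x ⊓ t) + 1 := by
  have hz : y ⊓ t ≤ y := inf_le_left
  have := tb_meet_step htb hc (ρ y - ρ (y ⊓ t)) y x (y ⊓ t) hxy hz le_rfl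
  have hxx : x ⊓ (y ⊓ t) = x ⊓ t := by
    rw [← inf_assoc]
    congr 1
    exact inf_eq_left.mpr hxy.le
  rcases this with h | h
  · rw [← hxx, ← h]; omega
  · rw [hxx] at h
    have := hc _ _ h
    omega

/-- Semimodularity consequence for joins: `x ⋖ y → ρ (y ⊔ t) ≤ ρ (x ⊔ t) + 1`. -/
lemma tb_join_rank (htb : TopBalanced L) (hc : ∀ x y : L, x ⋖ y → ρ y = ρ x + 1)
    (x y t : L) (hxy : x ⋖ y) : ρ (y ⊔ t) ≤ ρ (x ⊔ t) + 1 := by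
  have hz : x ≤ x ⊔ t := le_sup_left
  have := tb_join_step htb hc (ρ (x ⊔ t) - ρ x) x y (x ⊔ t) hxy hz le_rfl
  have hxx : y ⊔ (x ⊔ t) = y ⊔ t := by
    rw [← sup_assoc]
    congr 1
    exact sup_eq_left.mpr hxy.le
  rcases this with h | h
  · rw [← hxx, ← h]; omega
  · rw [hxx] at h
    have := hc _ _ h
    omega

/-- There is a walk of length `ρ y - ρ x` in the cover graph from `x` up to `y`. -/
lemma exists_walk_up (hc : ∀ x y : L, x ⋖ y → ρ y = ρ x + 1) :
    ∀ x y : L, x ≤ y → ∃ w : (coverGraph L).Walk x y, w.length = ρ y - ρ x := by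
  haveI : IsStronglyCoatomic L := IsStronglyCoatomic.of_wellFounded_gt wellFounded_gt
  intro x y
  induction y using WellFoundedLT.induction with
  | ind y IH =>
    intro hxy
    rcases eq_or_lt_of_le hxy with rfl | hlt
    · exact ⟨SimpleGraph.Walk.nil, by simp⟩
    · obtain ⟨y', hxy', hy'⟩ := exists_le_covBy_of_lt hlt
      obtain ⟨w, hw⟩ := IH y' hy'.lt hxy'
      refine ⟨w.concat (show (coverGraph L).Adj y' y from Or.inl hy'), ?_⟩
      rw [SimpleGraph.Walk.length_concat, hw]
      have := hc y' y hy'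
      have := rank_mono hc x y' hxy'
      omega

end Aux

theorem stmt_1 (L : Type*) [Lattice L] [OrderBot L] [Fintype L]
    (htb : TopBalanced L) (ρ : L → ℕ) (hρ : IsRankFunction L ρ) :
    ∀ s t : L,
      (((coverGraph L).dist s t : ℤ) = (ρ s : ℤ) + ρ t - 2 * ρ (s ⊓ t)) ∧
      (((coverGraph L).dist s t : ℤ) = 2 * (ρ (s ⊔ t) : ℤ) - ρ s - ρ t) := by
  obtain ⟨-, hc⟩ := hρ
  intro s t
  -- upper bound walk: s → s ⊓ t → t
  obtain ⟨w₁, hw₁⟩ := exists_walk_up hc (s ⊓ t) s inf_le_left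
  obtain ⟨w₂, hw₂⟩ := exists_walk_up hc (s ⊓ t) t inf_le_right
  obtain ⟨w₃, hw₃⟩ := exists_walk_up hc s (s ⊔ t) le_sup_left
  obtain ⟨w₄, hw₄⟩ := exists_walk_up hc t (s ⊔ t) le_sup_right
  have hms : ρ (s ⊓ t) ≤ ρ s := rank_mono hc _ _ inf_le_left
  have hmt : ρ (s ⊓ t) ≤ ρ t := rank_mono hc _ _ inf_le_right
  have hjs : ρ s ≤ ρ (s ⊔ t) := rank_mono hc _ _ le_sup_left
  have hjt : ρ t ≤ ρ (s ⊔ t) := rank_mono hc _ _ le_sup_right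
  have hub1 : (coverGraph L).dist s t ≤ ρ s + ρ t - 2 * ρ (s ⊓ t) := by
    have := SimpleGraph.dist_le (w₁.reverse.append w₂)
    rw [SimpleGraph.Walk.length_append, SimpleGraph.Walk.length_reverse, hw₁, hw₂] at this
    omega
  have hub2 : (coverGraph L).dist s t ≤ 2 * ρ (s ⊔ t) - ρ s - ρ t := by
    have := SimpleGraph.dist_le (w₃.append w₄.reverse)
    rw [SimpleGraph.Walk.length_append, SimpleGraph.Walk.length_reverse, hw₃, hw₄] at this
    omega
  -- lower bounds: along any walk to t, the potentials change by at most 1 per step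
  have hreach : (coverGraph L).Reachable s t := ⟨w₁.reverse.append w₂⟩
  obtain ⟨p, hp⟩ := hreach.exists_walk_length_eq_dist
  have key : ∀ {a b : L} (q : (coverGraph L).Walk a b),
      ((ρ a : ℤ) + ρ b - 2 * ρ (a ⊓ b) ≤ q.length) ∧
      (2 * (ρ (a ⊔ b) : ℤ) - ρ a - ρ b ≤ q.length) := by
    intro a b q
    induction q with
    | nil =>
      constructor <;> · simp only [SimpleGraph.Walk.length_nil, inf_idem, sup_idem]; push_cast; omega
    | @cons a c b hadj q IH =>
      obtain ⟨IH1, IH2⟩ := IH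
      rcases (show a ⋖ c ∨ c ⋖ a from hadj) with h | h
      · -- a ⋖ c
        have h1 : ρ c = ρ a + 1 := hc a c h
        have h2 : ρ (c ⊓ b) ≤ ρ (a ⊓ b) + 1 := tb_meet_rank htb hc a c b h
        have h3 : ρ (a ⊓ b) ≤ ρ (c ⊓ b) := rank_mono hc _ _ (inf_le_inf_right b h.le)
        have h4 : ρ (c ⊔ b) ≤ ρ (a ⊔ b) + 1 := tb_join_rank htb hc a c b h
        have h5 : ρ (a ⊔ b) ≤ ρ (c ⊔ b) := rank_mono hc _ _ (sup_le_sup_right h.le b)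
        constructor <;> · rw [SimpleGraph.Walk.length_cons]; push_cast at IH1 IH2 ⊢; omega
      · -- c ⋖ a
        have h1 : ρ a = ρ c + 1 := hc c a h
        have h2 : ρ (a ⊓ b) ≤ ρ (c ⊓ b) + 1 := tb_meet_rank htb hc c a b h
        have h3 : ρ (c ⊓ b) ≤ ρ (a ⊓ b) := rank_mono hc _ _ (inf_le_inf_right b h.le)
        have h4 : ρ (a ⊔ b) ≤ ρ (c ⊔ b) + 1 := tb_join_rank htb hc c a b h
        have h5 : ρ (c ⊔ b) ≤ ρ (a ⊔ b) := rank_mono hc _ _ (sup_le_sup_right h.le b)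
        constructor <;> · rw [SimpleGraph.Walk.length_cons]; push_cast at IH1 IH2 ⊢; omega
  obtain ⟨lb1, lb2⟩ := key p
  rw [hp] at lb1 lb2
  constructor <;> omega
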